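/- Let A be an invertible symmetric diagonally dominant real n×n matrix (A_{ii} ≥ Σ_{j≠i} |A_{ij}| for all i). Write A = D₁ + A_p + A_n + D₂, where A_p contains exactly the positive off-diagonal entries of A, A_n contains exactly the negative off-diagonal entries of A, D₁ is the diagonal matrix with D₁(i,i) = Σ_{j≠i} |A(i,j)|, and D₂ = A − A_p − A_n − D₁. Define Â = D₁ + A_n − A_p and the 2n×2n block matrix à = [[D₁ + D₂/2 + A_n, −D₂/2 − A_p], [−D₂/2 − A_p, D₁ + D₂/2 + A_n]]. Then Â and à are both graph Laplacian matrices, the multiset of eigenvalues of à is the disjoint union of the multiset of eigenvalues of Â and the multiset of eigenvalues of A, and log det A = ld(Ã) − ld(Â). -/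

import Mathlib

open Matrix

/-- A (weighted) graph Laplacian: symmetric, nonpositive off-diagonal entries,
all row sums zero. -/
def IsLaplacian {ι : Type*} [Fintype ι] (M : Matrix ι ι ℝ) : Prop :=
  M.IsSymm ∧ (∀ i j, i ≠ j → M i j ≤ 0) ∧ ∀ i, ∑ j, M i j = 0

/-- Pseudo-log-determinant: the sum of the logarithms of the positive eigenvalues
(roots of the characteristic polynomial, with multiplicity). -/
noncomputable def pld {ι : Type*} [Fintype ι] [DecidableEq ι] (M : Matrix ι ι ℝ) : ℝ :=
  ((M.charpoly.roots.filter (fun r => 0 < r)).map Real.log).sum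

open Polynomial in
lemma det_fromBlocks_comm' {m : Type*} [Fintype m] [DecidableEq m] {R : Type*} [CommRing R]
    (a b : Matrix m m R) :
    (Matrix.fromBlocks a b b a).det = (a + b).det * (a - b).det := by
  have key : Matrix.fromBlocks (1:Matrix m m R) (1:Matrix m m R) (0:Matrix m m R) (1:Matrix m m R) * Matrix.fromBlocks a b b a *
      Matrix.fromBlocks (1:Matrix m m R) (-1:Matrix m m R) (0:Matrix m m R) (1:Matrix m m R) =
      Matrix.fromBlocks (a + b) 0 b (a - b) := by
    rw [Matrix.fromBlocks_multiply, Matrix.fromBlocks_multiply]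
    congr 1
    all_goals first | (noncomm_ring; try simp) | noncomm_ring
  have h1 : (Matrix.fromBlocks (1:Matrix m m R) (1:Matrix m m R) (0:Matrix m m R) (1:Matrix m m R)).det = 1 := by
    rw [Matrix.det_fromBlocks_zero₂₁]; simp
  have h2 : (Matrix.fromBlocks (1:Matrix m m R) (-1:Matrix m m R) (0:Matrix m m R) (1:Matrix m m R)).det = 1 := by
    rw [Matrix.det_fromBlocks_zero₂₁]; simp
  have h := congrArg Matrix.det key
  rw [Matrix.det_mul, Matrix.det_mul, h1, h2, Matrix.det_fromBlocks_zero₁₂] at h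
  simpa using h

open Polynomial in
lemma charmatrix_add' {m : Type*} [Fintype m] [DecidableEq m] {R : Type*} [CommRing R]
    (a b : Matrix m m R) :
    charmatrix (a + b) = charmatrix a - b.map C := by
  ext i j
  by_cases h : i = j <;>
    simp [h, charmatrix_apply, Matrix.diagonal_apply, Matrix.map_apply] <;> ring

open Polynomial in
lemma charmatrix_sub' {m : Type*} [Fintype m] [DecidableEq m] {R : Type*} [CommRing R]
    (a b : Matrix m m R) :
    charmatrix (a - b) = charmatrix a + b.map C := by
  ext i j
  by_cases h : i = j <;>
    simp [h, charmatrix_apply, Matrix.diagonal_apply, Matrix.map_apply] <;> ring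

open Polynomial in
lemma charpoly_fromBlocks_comm {m : Type*} [Fintype m] [DecidableEq m] {R : Type*} [CommRing R]
    (a b : Matrix m m R) :
    (Matrix.fromBlocks a b b a).charpoly = (a + b).charpoly * (a - b).charpoly := by
  rw [Matrix.charpoly, Matrix.charmatrix_fromBlocks, det_fromBlocks_comm']
  rw [← sub_eq_add_neg, sub_neg_eq_add, ← charmatrix_add', ← charmatrix_sub']
  rfl

open Polynomial in
lemma charpoly_conj_units' {m : Type*} [Fintype m] [DecidableEq m] {R : Type*} [CommRing R]
    (U V M : Matrix m m R) (hUV : U * V = 1) :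
    (U * M * V).charpoly = M.charpoly := by
  have hone : (1 : Matrix m m R).map (C : R → R[X]) = 1 := by
    ext i j; by_cases h : i = j <;> simp [h, Matrix.one_apply]
  have hcm : charmatrix (U * M * V) =
      U.map (C : R → R[X]) * charmatrix M * V.map (C : R → R[X]) := by
    rw [charmatrix, charmatrix]
    rw [mul_sub, sub_mul]
    congr 1
    · have h1 : U.map (C : R → R[X]) * Matrix.scalar m (X : R[X]) =
          Matrix.scalar m (X : R[X]) * U.map (C : R → R[X]) :=
        (Matrix.scalar_commute (X : R[X]) (fun r' => Commute.all _ _) _).symm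
      rw [h1, mul_assoc, ← Matrix.map_mul (f := (C : R →+* R[X])), hUV, hone, mul_one]
    · show _ = U.map _ * ((C : R →+* R[X]).mapMatrix M) * V.map _
      rw [RingHom.mapMatrix_apply, Matrix.map_mul (f := (C : R →+* R[X])),
        Matrix.map_mul (f := (C : R →+* R[X])), RingHom.mapMatrix_apply]
  have hdet : (U.map (C : R → R[X])).det * (V.map (C : R → R[X])).det = 1 := by
    rw [← Matrix.det_mul, ← Matrix.map_mul (f := (C : R →+* R[X])), hUV, hone, Matrix.det_one]
  rw [Matrix.charpoly, Matrix.charpoly, hcm, Matrix.det_mul, Matrix.det_mul]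
  rw [mul_comm, ← mul_assoc, mul_comm ((V.map (C : R → R[X])).det), hdet, one_mul]

open Polynomial in
lemma charpoly_diagonal' {m : Type*} [Fintype m] [DecidableEq m] {R : Type*} [CommRing R]
    (d : m → R) :
    (Matrix.diagonal d).charpoly = ∏ i, (X - C (d i)) := by
  rw [Matrix.charpoly]
  have : charmatrix (Matrix.diagonal d) = Matrix.diagonal (fun i => X - C (d i)) := by
    ext i j
    by_cases h : i = j <;> simp [h, charmatrix_apply, Matrix.diagonal_apply]
  rw [this, Matrix.det_diagonal]

open Polynomial in
lemma charpoly_eq_prod_eigs {k : Type*} [Fintype k] [DecidableEq k]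
    (A : Matrix k k ℝ) (hA : A.IsHermitian) :
    A.charpoly = ∏ i, (X - C (hA.eigenvalues i)) := by
  have hspec := hA.spectral_theorem (𝕜 := ℝ)
  have hUV : (hA.eigenvectorUnitary : Matrix k k ℝ) * star (hA.eigenvectorUnitary : Matrix k k ℝ)
      = 1 := (Matrix.mem_unitaryGroup_iff).mp hA.eigenvectorUnitary.2
  calc A.charpoly
      = ((hA.eigenvectorUnitary : Matrix k k ℝ) *
          Matrix.diagonal (RCLike.ofReal ∘ hA.eigenvalues) *
          star (hA.eigenvectorUnitary : Matrix k k ℝ)).charpoly := by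
            conv_lhs => rw [hspec, Unitary.conjStarAlgAut_apply]
    _ = (Matrix.diagonal (RCLike.ofReal ∘ hA.eigenvalues)).charpoly :=
        charpoly_conj_units' _ _ _ hUV
    _ = ∏ i, (X - C (hA.eigenvalues i)) := by
        rw [charpoly_diagonal']
        simp [RCLike.ofReal_real_eq_id]

open Polynomial in
lemma roots_charpoly_eq_eigs {k : Type*} [Fintype k] [DecidableEq k]
    (A : Matrix k k ℝ) (hA : A.IsHermitian) :
    A.charpoly.roots = Finset.univ.val.map hA.eigenvalues := by
  rw [charpoly_eq_prod_eigs A hA, ← Polynomial.roots_multiset_prod_X_sub_C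
    (Finset.univ.val.map hA.eigenvalues)]
  congr 1
  rw [Multiset.map_map, Finset.prod_eq_multiset_prod]
  rfl

lemma eigs_pos_of_dd {k : Type*} [Fintype k] [DecidableEq k]
    (A : Matrix k k ℝ) (hA : A.IsHermitian)
    (hdd : ∀ i, ∑ j ∈ Finset.univ.erase i, |A i j| ≤ A i i) (hdet : A.det ≠ 0) :
    ∀ i, 0 < hA.eigenvalues i := by
  have hnn : ∀ i, 0 ≤ hA.eigenvalues i := by
    intro i
    have hev : Module.End.HasEigenvalue (Matrix.toLin' A) (hA.eigenvalues i) := by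
      apply Module.End.hasEigenvalue_of_hasEigenvector (x := ⇑(hA.eigenvectorBasis i))
      constructor
      · rw [Module.End.mem_eigenspace_iff, Matrix.toLin'_apply]
        exact hA.mulVec_eigenvectorBasis i
      · intro h
        exact hA.eigenvectorBasis.toBasis.ne_zero i (by
          rw [OrthonormalBasis.coe_toBasis]; simpa using h)
    obtain ⟨kk, hk⟩ := eigenvalue_mem_ball hev
    rw [Metric.mem_closedBall, Real.dist_eq] at hk
    simp only [Real.norm_eq_abs] at hk
    have h1 := (abs_le.mp hk).1
    have h2 := hdd kk
    linarith
  intro i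
  rcases (hnn i).lt_or_eq with h | h
  · exact h
  · exfalso
    apply hdet
    rw [hA.det_eq_prod_eigenvalues]
    exact Finset.prod_eq_zero (Finset.mem_univ i) (by simp [← h])

lemma pld_eq_log_det {k : Type*} [Fintype k] [DecidableEq k]
    (A : Matrix k k ℝ) (hA : A.IsHermitian)
    (hroots : A.charpoly.roots = Finset.univ.val.map hA.eigenvalues)
    (hpos : ∀ i, 0 < hA.eigenvalues i) :
    pld A = Real.log A.det := by
  rw [pld, hroots, Multiset.filter_eq_self.mpr (by
    intro r hr
    obtain ⟨i, _, rfl⟩ := Multiset.mem_map.mp hr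
    exact hpos i)]
  rw [Multiset.map_map, hA.det_eq_prod_eigenvalues]
  have : Real.log (∏ i, (hA.eigenvalues i : ℝ)) = ∑ i, Real.log (hA.eigenvalues i) :=
    Real.log_prod (fun i _ => (hpos i).ne')
  simp only [RCLike.ofReal_real_eq_id, id_eq]
  rw [this]
  rfl

/-- Kelner et al. reduction for log-determinants of invertible SDD matrices:
`Â` and `Ã` are Laplacians, the eigenvalue multiset of `Ã` is the disjoint union of those of
`Â` and `A` (stated via characteristic polynomials), and `log det A = ld(Ã) - ld(Â)`. -/
theorem kelner_reduction_log_det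
    {n : ℕ} (A : Matrix (Fin n) (Fin n) ℝ) (hsymm : A.IsSymm)
    (hdd : ∀ i, ∑ j ∈ Finset.univ.erase i, |A i j| ≤ A i i)
    (hinv : IsUnit A.det)
    (Ap An D1 D2 Ahat : Matrix (Fin n) (Fin n) ℝ)
    (Atil : Matrix (Fin n ⊕ Fin n) (Fin n ⊕ Fin n) ℝ)
    (hAp : Ap = fun i j => if i ≠ j ∧ 0 < A i j then A i j else 0)
    (hAn : An = fun i j => if i ≠ j ∧ A i j < 0 then A i j else 0)
    (hD1 : D1 = Matrix.diagonal (fun i => ∑ j ∈ Finset.univ.erase i, |A i j|))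
    (hD2 : D2 = A - Ap - An - D1)
    (hAhat : Ahat = D1 + An - Ap)
    (hAtil : Atil = Matrix.fromBlocks
      (D1 + (1 / 2 : ℝ) • D2 + An) (-(1 / 2 : ℝ) • D2 - Ap)
      (-(1 / 2 : ℝ) • D2 - Ap) (D1 + (1 / 2 : ℝ) • D2 + An)) :
    IsLaplacian Ahat ∧ IsLaplacian Atil ∧
    Atil.charpoly = Ahat.charpoly * A.charpoly ∧
    Real.log A.det = pld Atil - pld Ahat := by
  have hA' : ∀ i j, A j i = A i j := fun i j => hsymm.apply i j
  have hApd : ∀ i, Ap i i = 0 := by intro i; rw [hAp]; simp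
  have hAnd : ∀ i, An i i = 0 := by intro i; rw [hAn]; simp
  have hApnn : ∀ i j, 0 ≤ Ap i j := by
    intro i j; rw [hAp]; dsimp only
    split_ifs with h
    · exact le_of_lt h.2
    · exact le_refl 0
  have hApAn : ∀ i j, i ≠ j → Ap i j + An i j = A i j := by
    intro i j hij; rw [hAp, hAn]; dsimp only
    rcases lt_trichotomy (A i j) 0 with h | h | h
    · rw [if_neg (fun hc => absurd hc.2 (by linarith)), if_pos ⟨hij, h⟩]; ring
    · simp [h]
    · rw [if_pos ⟨hij, h⟩, if_neg (fun hc => absurd hc.2 (by linarith))]; ring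
  have hAnAp : ∀ i j, i ≠ j → An i j - Ap i j = -|A i j| := by
    intro i j hij; rw [hAp, hAn]; dsimp only
    rcases lt_trichotomy (A i j) 0 with h | h | h
    · rw [if_pos ⟨hij, h⟩, if_neg (fun hc => absurd hc.2 (by linarith)), abs_of_neg h]; ring
    · simp [h]
    · rw [if_neg (fun hc => absurd hc.2 (by linarith)), if_pos ⟨hij, h⟩, abs_of_pos h]; ring
  have hApsymm : Ap.IsSymm := by
    apply Matrix.IsSymm.ext
    intro i j
    rw [hAp]; dsimp only
    rw [hA' i j]
    by_cases h : i = j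
    · subst h; rfl
    · simp [h, Ne.symm h]
  have hAnsymm : An.IsSymm := by
    apply Matrix.IsSymm.ext
    intro i j
    rw [hAn]; dsimp only
    rw [hA' i j]
    by_cases h : i = j
    · subst h; rfl
    · simp [h, Ne.symm h]
  have hD1symm : D1.IsSymm := by rw [hD1]; exact Matrix.isSymm_diagonal _
  have hD2symm : D2.IsSymm := by
    rw [hD2]; exact ((hsymm.sub hApsymm).sub hAnsymm).sub hD1symm
  have hAhatsymm : Ahat.IsSymm := by
    rw [hAhat]; exact (hD1symm.add hAnsymm).sub hApsymm
  have hD1off : ∀ i j, i ≠ j → D1 i j = 0 := by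
    intro i j h; rw [hD1]; exact Matrix.diagonal_apply_ne _ h
  have hD1diag : ∀ i, D1 i i = ∑ j ∈ Finset.univ.erase i, |A i j| := by
    intro i; rw [hD1]; exact Matrix.diagonal_apply_eq _ i
  have hD2off : ∀ i j, i ≠ j → D2 i j = 0 := by
    intro i j h
    rw [hD2]
    simp only [Matrix.sub_apply]
    rw [hD1off i j h]
    have := hApAn i j h
    linarith
  have hD2diag : ∀ i, 0 ≤ D2 i i := by
    intro i
    rw [hD2]
    simp only [Matrix.sub_apply]
    rw [hD1diag i, hApd i, hAnd i]
    have := hdd i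
    linarith
  -- entries of Ahat
  have hAhat_off : ∀ i j, i ≠ j → Ahat i j = -|A i j| := by
    intro i j h
    rw [hAhat]
    simp only [Matrix.sub_apply, Matrix.add_apply]
    rw [hD1off i j h]
    have := hAnAp i j h
    linarith
  have hAhat_diag : ∀ i, Ahat i i = ∑ j ∈ Finset.univ.erase i, |A i j| := by
    intro i
    rw [hAhat]
    simp only [Matrix.sub_apply, Matrix.add_apply]
    rw [hD1diag i, hApd i, hAnd i]
    ring
  have hAhatsum : ∀ i, ∑ j, Ahat i j = 0 := by
    intro i
    rw [← Finset.add_sum_erase _ _ (Finset.mem_univ i), hAhat_diag i]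
    have h2 : ∑ j ∈ Finset.univ.erase i, Ahat i j
        = -∑ j ∈ Finset.univ.erase i, |A i j| := by
      rw [← Finset.sum_neg_distrib]
      apply Finset.sum_congr rfl
      intro j hj
      exact hAhat_off i j (Finset.ne_of_mem_erase hj).symm
    rw [h2]; ring
  have hLapAhat : IsLaplacian Ahat := by
    refine ⟨hAhatsymm, fun i j h => ?_, hAhatsum⟩
    rw [hAhat_off i j h]
    simp [abs_nonneg]
  -- block pieces
  set B := D1 + (1 / 2 : ℝ) • D2 + An with hB
  set CC := -(1 / 2 : ℝ) • D2 - Ap with hCC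
  have hBC : B + CC = Ahat := by rw [hB, hCC, hAhat]; module
  have hAeq : A = D1 + D2 + Ap + An := by rw [hD2]; abel
  have hBmC : B - CC = A := by rw [hB, hCC, hAeq]; module
  have hBsymm : B.IsSymm := (hD1symm.add (hD2symm.smul _)).add hAnsymm
  have hCCsymm : CC.IsSymm := by
    apply Matrix.IsSymm.ext
    intro i j
    rw [hCC]
    simp only [Matrix.sub_apply, Matrix.smul_apply, smul_eq_mul]
    rw [hD2symm.apply i j, hApsymm.apply i j]
  -- Laplacian for Atil
  have hCC_entry : ∀ i j, CC i j = -(1 / 2 : ℝ) * D2 i j - Ap i j := by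
    intro i j
    rw [hCC]
    simp [Matrix.sub_apply, Matrix.smul_apply]
  have hCCle : ∀ i j, CC i j ≤ 0 := by
    intro i j
    rw [hCC_entry]
    by_cases h : i = j
    · subst h
      have := hD2diag i
      have := hApnn i i
      linarith
    · rw [hD2off i j h]
      have := hApnn i j
      linarith
  have hB_off : ∀ i j, i ≠ j → B i j ≤ 0 := by
    intro i j h
    rw [hB]
    simp only [Matrix.add_apply, Matrix.smul_apply]
    rw [hD1off i j h, hD2off i j h]
    have : An i j ≤ 0 := by
      rw [hAn]; dsimp only
      split_ifs with hc
      · exact le_of_lt hc.2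
      · exact le_refl 0
    simp only [smul_eq_mul]
    linarith
  have hLapAtil : IsLaplacian Atil := by
    refine ⟨?_, ?_, ?_⟩
    · rw [hAtil]
      exact Matrix.IsSymm.fromBlocks hBsymm hCCsymm.eq hBsymm
    · rintro (i | i) (j | j) hij <;> rw [hAtil]
      · exact hB_off i j (fun h => hij (by rw [h]))
      · simpa using hCCle i j
      · simpa using hCCle i j
      · exact hB_off i j (fun h => hij (by rw [h]))
    · rintro (i | i) <;> rw [hAtil] <;>
        rw [Fintype.sum_sum_type] <;>
        simp only [Matrix.fromBlocks_apply₁₁, Matrix.fromBlocks_apply₁₂,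
          Matrix.fromBlocks_apply₂₁, Matrix.fromBlocks_apply₂₂]
      · rw [← Finset.sum_add_distrib]
        have : ∀ j, B i j + CC i j = Ahat i j := by
          intro j
          rw [← hBC]
          simp [Matrix.add_apply]
        simp only [this]
        exact hAhatsum i
      · rw [← Finset.sum_add_distrib]
        have : ∀ j, CC i j + B i j = Ahat i j := by
          intro j
          rw [← hBC]
          simp [Matrix.add_apply]; ring
        simp only [this]
        exact hAhatsum i
  -- charpoly factorization
  have hcp : Atil.charpoly = Ahat.charpoly * A.charpoly := by
    rw [hAtil]
    rw [charpoly_fromBlocks_comm]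
    rw [show D1 + (1 / 2 : ℝ) • D2 + An + (-(1 / 2 : ℝ) • D2 - Ap) = Ahat from hBC,
      show D1 + (1 / 2 : ℝ) • D2 + An - (-(1 / 2 : ℝ) • D2 - Ap) = A from hBmC]
  refine ⟨hLapAhat, hLapAtil, hcp, ?_⟩
  -- log det
  have hHerm : A.IsHermitian := by
    rw [Matrix.IsHermitian]
    ext i j
    simp [Matrix.conjTranspose_apply, hA' i j]
  have hdet_ne : A.det ≠ 0 := hinv.ne_zero
  have hpos := eigs_pos_of_dd A hHerm hdd hdet_ne
  have hroots := roots_charpoly_eq_eigs A hHerm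
  have hpldA : pld A = Real.log A.det := pld_eq_log_det A hHerm hroots hpos
  have hsplit : pld Atil = pld Ahat + pld A := by
    rw [pld, pld, pld, hcp, Polynomial.roots_mul
      (mul_ne_zero (Matrix.charpoly_monic _).ne_zero (Matrix.charpoly_monic _).ne_zero),
      Multiset.filter_add, Multiset.map_add, Multiset.sum_add]
  rw [hsplit, hpldA]
  ring
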